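/- Let (π, K) be a ĝ[σ]-module structure on a complex vector space W that lies in category C, and let π_R and π_E = π − π_R be as defined from the projection ψ_R. Then: (a) (π_R, K) is again a ĝ[σ]-module structure on W, i.e. K commutes with every π_R(u) and [π_R(u), π_R(v)] = π_R([u,v]) + γ(u,v) K for all u, v ∈ L(g,σ); (b) π_E is a Lie algebra homomorphism from L(g,σ) to End(W), i.e. [π_E(u), π_E(v)] = π_E([u,v]) for all u, v; (c) [π_R(u), π_E(v)] = 0 for all u, v ∈ L(g,σ); (d) (W, (π_R, K)) is restricted; (e) there is a nonzero polynomial p ∈ ℂ[X] such that π_E((s^k p(s^N)) ⊗ a) = 0 for all k ∈ ℤ and a ∈ g_k; (f) if (W, (π, K)) is irreducible, then the only subspaces of W invariant under K and under all the operators π_R(u) and π_E(v) (u, v ∈ L(g,σ)) are 0 and W. -/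

import Mathlib

open scoped TensorProduct

noncomputable section
namespace Twisted

variable (g : Type) [LieRing g] [LieAlgebra ℂ g]

abbrev Amb : Type := LaurentPolynomial ℂ ⊗[ℂ] g

instance : LieAlgebra ℂ (Amb g) :=
  { (inferInstance : Module ℂ (Amb g)) with
    lie_smul := fun c x y => by
      rw [← algebraMap_smul (LaurentPolynomial ℂ) c y,
        lie_smul (R := LaurentPolynomial ℂ) (algebraMap ℂ (LaurentPolynomial ℂ) c) x y,
        algebraMap_smul] }

/-- `ε = exp(2πi/N)`. -/
def eps (N : ℕ) : ℂ := Complex.exp (2 * (Real.pi : ℂ) * Complex.I / (N : ℂ))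

variable (σ : g ≃ₗ⁅ℂ⁆ g) (N : ℕ)

/-- `a ∈ g_k`, i.e. `σ a = ε^k • a`. -/
def homog (k : ℤ) (a : g) : Prop := σ a = eps N ^ k • a

/-- The generators `s^k ⊗ a`, for `a ∈ g_k`. -/
def genSet : Set (Amb g) :=
  {x | ∃ (k : ℤ) (a : g), homog g σ N k a ∧ x = LaurentPolynomial.T k ⊗ₜ[ℂ] a}

/-- The twisted loop algebra `L(g,σ)`, the Lie subalgebra of `ℂ[s,s⁻¹] ⊗ g`
spanned by the elements `s^k ⊗ a` with `a ∈ g_k`. -/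
def Loop : LieSubalgebra ℂ (Amb g) := LieSubalgebra.lieSpan ℂ (Amb g) (genSet g σ N)

/-- The element `s^k ⊗ a` of `L(g,σ)`, for `a ∈ g_k`. -/
def sGen (k : ℤ) (a : g) (h : homog g σ N k a) : Loop g σ N :=
  ⟨LaurentPolynomial.T k ⊗ₜ[ℂ] a, LieSubalgebra.subset_lieSpan ⟨k, a, h, rfl⟩⟩

/-- The element `(s^k p(s^N)) ⊗ a` of `L(g,σ)`, for `a ∈ g_k`. -/
def sPolyGen (p : Polynomial ℂ) (k : ℤ) (a : g)
    (h : ∀ i : ℕ, homog g σ N (k + N * i) a) : Loop g σ N :=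
  ∑ i ∈ Finset.range (p.natDegree + 1), p.coeff i • sGen g σ N (k + N * i) a (h i)

variable (N : ℕ) (W : Type) [AddCommGroup W] [Module ℂ W]

/-- The shift operator on `F(W) = (ℤ → End W)`, encoding multiplication by `x`:
`(x·a)_k = a_{k+N}`. -/
def shiftE : Module.End ℂ (ℤ → Module.End ℂ W) where
  toFun a := fun k => a (k + N)
  map_add' _ _ := rfl
  map_smul' _ _ := rfl

/-- The action of `ℂ[x]` on `F(W)`. -/
def polyAct (p : Polynomial ℂ) (a : ℤ → Module.End ℂ W) : ℤ → Module.End ℂ W :=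
  Polynomial.aeval (shiftE N W) p a

/-- Membership in `E(W)`. -/
def memE (a : ℤ → Module.End ℂ W) : Prop :=
  ∀ w : W, ∃ M : ℤ, ∀ k ≥ M, a k w = 0

/-- Membership in `Ē(W)`. -/
def memEbar (a : ℤ → Module.End ℂ W) : Prop :=
  ∃ p : Polynomial ℂ, p ≠ 0 ∧ memE W (polyAct N W p a)

/-- Membership in `Ē₀(W)`. -/
def memE0 (a : ℤ → Module.End ℂ W) : Prop :=
  ∃ p : Polynomial ℂ, p ≠ 0 ∧ polyAct N W p a = 0

variable (g : Type) [LieRing g] [LieAlgebra ℂ g] (σ : g ≃ₗ⁅ℂ⁆ g) (N : ℕ)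
variable (B : LinearMap.BilinForm ℂ g)

/-- `γ` is the bilinear form on `L(g,σ)` with
`γ(s^m ⊗ a, s^n ⊗ b) = (m/N) B(a,b) δ_{m+n,0}`. -/
def IsGamma (γ : Loop g σ N →ₗ[ℂ] Loop g σ N →ₗ[ℂ] ℂ) : Prop :=
  ∀ (m n : ℤ) (a b : g) (ha : homog g σ N m a) (hb : homog g σ N n b),
    γ (sGen g σ N m a ha) (sGen g σ N n b hb) =
      if m + n = 0 then (m : ℂ) / (N : ℂ) * B a b else 0

variable (W : Type) [AddCommGroup W] [Module ℂ W]

/-- `(π, K)` is a `ĝ[σ]`-module structure on `W` (relative to the form `γ`). -/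
def IsHatMod (π : Loop g σ N →ₗ[ℂ] Module.End ℂ W) (K : Module.End ℂ W)
    (γ : Loop g σ N →ₗ[ℂ] Loop g σ N →ₗ[ℂ] ℂ) : Prop :=
  (∀ u, K * π u = π u * K) ∧
  (∀ u v, π u * π v - π v * π u = π ⁅u, v⁆ + γ u v • K)

/-- `(π, K)` is restricted. -/
def IsRestricted (π : Loop g σ N →ₗ[ℂ] Module.End ℂ W) : Prop :=
  ∀ (w : W) (i : ℤ) (a : g), homog g σ N i a →
    ∃ M : ℤ, ∀ k ≥ M, ∀ h : homog g σ N k a, π (sGen g σ N k a h) w = 0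

/-- `(π, K)` is irreducible. -/
def IsIrred (π : Loop g σ N →ₗ[ℂ] Module.End ℂ W) (K : Module.End ℂ W) : Prop :=
  Nontrivial W ∧ ∀ S : Submodule ℂ W, (∀ x ∈ S, K x ∈ S) →
    (∀ u, ∀ x ∈ S, π u x ∈ S) → S = ⊥ ∨ S = ⊤

open scoped Classical in
/-- The generating function `π_a ∈ F(W)` attached to a homogeneous element `a`. -/
def piFun (π : Loop g σ N →ₗ[ℂ] Module.End ℂ W) (a : g) : ℤ → Module.End ℂ W :=
  fun k => if h : homog g σ N k a then π (sGen g σ N k a h) else 0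

/-- `(π, K)` lies in category `C`. -/
def InCatC (π : Loop g σ N →ₗ[ℂ] Module.End ℂ W) : Prop :=
  ∃ p : Polynomial ℂ, p ≠ 0 ∧ ∀ (i : ℤ) (a : g), homog g σ N i a →
    memE W (polyAct N W p (piFun g σ N W π a))

/-- `πR` is the map `π_R` determined by `π_R(s^k ⊗ a) = (ψ_R(π_a))_k`,
where `ψ_R(π_a)` is the projection of `π_a` to `E(W)` along `Ē₀(W)`. -/
def IsPiR (π πR : Loop g σ N →ₗ[ℂ] Module.End ℂ W) : Prop :=
  ∀ a : g, (∃ i : ℤ, homog g σ N i a) →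
    ∃ e : ℤ → Module.End ℂ W, memE W e ∧ memE0 N W (piFun g σ N W π a - e) ∧
      ∀ (k : ℤ) (h : homog g σ N k a), πR (sGen g σ N k a h) = e k

section AuxF
variable {N : ℕ} {W : Type} [AddCommGroup W] [Module ℂ W]

lemma shiftE_pow_apply (i : ℕ) (f : ℤ → Module.End ℂ W) (k : ℤ) :
    ((shiftE N W ^ i) f) k = f (k + (N : ℤ) * i) := by
  induction i generalizing f k with
  | zero => simp
  | succ i ih =>
    rw [pow_succ, Module.End.mul_apply, ih]
    show f (k + (N:ℤ) * i + N) = _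
    congr 1
    push_cast
    ring

lemma polyAct_apply (p : Polynomial ℂ) (f : ℤ → Module.End ℂ W) (k : ℤ) :
    polyAct N W p f k =
      ∑ i ∈ Finset.range (p.natDegree + 1), p.coeff i • f (k + (N:ℤ) * i) := by
  unfold polyAct
  rw [Polynomial.aeval_eq_sum_range, LinearMap.sum_apply, Finset.sum_apply]
  refine Finset.sum_congr rfl fun i _ => ?_
  simp [shiftE_pow_apply]

lemma memE_add {f h : ℤ → Module.End ℂ W} (hf : memE W f) (hh : memE W h) :
    memE W (fun k => f k + h k) := by
  intro w
  obtain ⟨M1, h1⟩ := hf w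
  obtain ⟨M2, h2⟩ := hh w
  exact ⟨max M1 M2, fun k hk => by
    simp [h1 k (le_trans (le_max_left _ _) hk), h2 k (le_trans (le_max_right _ _) hk)]⟩

lemma memE_neg {f : ℤ → Module.End ℂ W} (hf : memE W f) : memE W (fun k => - f k) := by
  intro w
  obtain ⟨M, h⟩ := hf w
  exact ⟨M, fun k hk => by simp [h k hk]⟩

lemma memE_sub {f h : ℤ → Module.End ℂ W} (hf : memE W f) (hh : memE W h) :
    memE W (fun k => f k - h k) := by
  have := memE_add hf (memE_neg hh)
  simpa [sub_eq_add_neg] using this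

lemma memE_smul (c : ℂ) {f : ℤ → Module.End ℂ W} (hf : memE W f) :
    memE W (fun k => c • f k) := by
  intro w
  obtain ⟨M, h⟩ := hf w
  exact ⟨M, fun k hk => by simp [h k hk]⟩

lemma memE_lcomp (T : Module.End ℂ W) {f : ℤ → Module.End ℂ W} (hf : memE W f) :
    memE W (fun k => T * f k) := by
  intro w
  obtain ⟨M, h⟩ := hf w
  exact ⟨M, fun k hk => by
    show T (f k w) = 0
    rw [h k hk, map_zero]⟩

lemma memE_rcomp (T : Module.End ℂ W) {f : ℤ → Module.End ℂ W} (hf : memE W f) :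
    memE W (fun k => f k * T) := by
  intro w
  obtain ⟨M, h⟩ := hf (T w)
  exact ⟨M, fun k hk => h k hk⟩

lemma memE_shift (l : ℤ) {f : ℤ → Module.End ℂ W} (hf : memE W f) :
    memE W (fun k => f (k + l)) := by
  intro w
  obtain ⟨M, h⟩ := hf w
  exact ⟨M - l, fun k hk => h (k + l) (by omega)⟩

lemma memE_finsum {ι : Type*} (s : Finset ι) (F : ι → ℤ → Module.End ℂ W)
    (h : ∀ i ∈ s, memE W (F i)) : memE W (fun k => ∑ i ∈ s, F i k) := by
  classical
  induction s using Finset.induction with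
  | empty => intro w; exact ⟨0, fun k _ => by simp⟩
  | insert x s' hx ih =>
    have := memE_add (h x (Finset.mem_insert_self x s'))
      (ih fun i hi => h i (Finset.mem_insert_of_mem hi))
    intro w
    obtain ⟨M, hM⟩ := this w
    exact ⟨M, fun k hk => by simpa [Finset.sum_insert hx] using hM k hk⟩

lemma memE_polyAct (p : Polynomial ℂ) {f : ℤ → Module.End ℂ W} (hf : memE W f) :
    memE W (polyAct N W p f) := by
  have : memE W (fun k => ∑ i ∈ Finset.range (p.natDegree + 1),
      p.coeff i • f (k + (N:ℤ) * i)) :=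
    memE_finsum _ _ fun i _ => memE_smul _ (memE_shift _ hf)
  intro w
  obtain ⟨M, hM⟩ := this w
  exact ⟨M, fun k hk => by rw [polyAct_apply]; exact hM k hk⟩

lemma polyAct_sub (p : Polynomial ℂ) (f h : ℤ → Module.End ℂ W) :
    polyAct N W p (f - h) = polyAct N W p f - polyAct N W p h := by
  unfold polyAct; exact map_sub _ _ _

lemma polyAct_mul (q p : Polynomial ℂ) (f : ℤ → Module.End ℂ W) :
    polyAct N W (q * p) f = polyAct N W q (polyAct N W p f) := by
  unfold polyAct; rw [map_mul]; rfl

lemma polyAct_lcomp (T : Module.End ℂ W) (p : Polynomial ℂ) (f : ℤ → Module.End ℂ W) :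
    polyAct N W p (fun k => T * f k) = fun k => T * polyAct N W p f k := by
  funext k
  simp [polyAct_apply, Finset.mul_sum, mul_smul_comm]

lemma polyAct_rcomp (T : Module.End ℂ W) (p : Polynomial ℂ) (f : ℤ → Module.End ℂ W) :
    polyAct N W p (fun k => f k * T) = fun k => polyAct N W p f k * T := by
  funext k
  simp [polyAct_apply, Finset.sum_mul, smul_mul_assoc]

lemma polyAct_shift (l : ℤ) (p : Polynomial ℂ) (f : ℤ → Module.End ℂ W) :
    polyAct N W p (fun k => f (k + l)) = fun k => polyAct N W p f (k + l) := by
  funext k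
  simp only [polyAct_apply]
  refine Finset.sum_congr rfl fun i _ => ?_
  ring_nf

lemma eq_zero_of_polyAct (hN : 0 < N) {p : Polynomial ℂ} (hp : p ≠ 0)
    {f : ℤ → Module.End ℂ W} (h0 : polyAct N W p f = 0) (hE : memE W f) : f = 0 := by
  set t := p.natTrailingDegree with ht
  have hct : p.coeff t ≠ 0 := Polynomial.coeff_natTrailingDegree_ne_zero.mpr hp
  have htd : t ≤ p.natDegree := p.natTrailingDegree_le_natDegree
  funext k
  apply LinearMap.ext
  intro w
  obtain ⟨M, hM⟩ := hE w
  have key : ∀ j : ℕ, ∀ k : ℤ, M - j ≤ k → f k w = 0 := by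
    intro j
    induction j with
    | zero => intro k hk; exact hM k (by omega)
    | succ j ih =>
      intro k hk
      by_cases hk' : M - j ≤ k
      · exact ih k hk'
      have hrel : polyAct N W p f (k - (N:ℤ) * t) w = 0 := by rw [h0]; rfl
      rw [polyAct_apply, LinearMap.sum_apply] at hrel
      have hsingle : ∀ i ∈ Finset.range (p.natDegree + 1), i ≠ t →
          (p.coeff i • f (k - (N:ℤ) * t + (N:ℤ) * i)) w = 0 := by
        intro i _ hit
        rcases lt_or_gt_of_ne hit with hlt | hgt
        · rw [Polynomial.coeff_eq_zero_of_lt_natTrailingDegree hlt]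
          simp
        · have : f (k - (N:ℤ) * t + (N:ℤ) * i) w = 0 := by
            apply ih
            have : (N:ℤ) * t + (N:ℤ) ≤ (N:ℤ) * i := by
              have : (t:ℤ) + 1 ≤ i := by exact_mod_cast hgt
              nlinarith [Int.natCast_pos.mpr hN]
            omega
          simp [this]
      rw [Finset.sum_eq_single_of_mem t (Finset.mem_range.mpr (by omega)) hsingle] at hrel
      have : k - (N:ℤ) * t + (N:ℤ) * t = k := by ring
      rw [this] at hrel
      simpa [hct] using hrel
  by_cases hk : M ≤ k
  · exact hM k hk
  · exact key (M - k).toNat k (by omega)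

lemma decomp_unique (hN : 0 < N) {p : Polynomial ℂ} (hp : p ≠ 0)
    {e1 e2 n1 n2 : ℤ → Module.End ℂ W}
    (he1 : memE W e1) (he2 : memE W e2)
    (hn1 : polyAct N W p n1 = 0) (hn2 : polyAct N W p n2 = 0)
    (hsum : ∀ k, e1 k + n1 k = e2 k + n2 k) : e1 = e2 ∧ n1 = n2 := by
  have hdiff : (fun k => e1 k - e2 k) = 0 := by
    apply eq_zero_of_polyAct hN hp
    · have : (fun k => e1 k - e2 k) = n2 - n1 := by
        funext k
        have := hsum k
        simp only [Pi.sub_apply]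
        linear_combination (norm := abel) this
      rw [this, polyAct_sub, hn1, hn2, sub_zero]
    · exact memE_sub he1 he2
  have h1 : e1 = e2 := by
    funext k
    have := congrFun hdiff k
    simp only [Pi.zero_apply] at this
    exact sub_eq_zero.mp this
  exact ⟨h1, by
    funext k
    have := hsum k
    rw [congrFun h1 k] at this
    exact add_left_cancel this⟩

end AuxF
section AuxG
variable {g : Type} [LieRing g] [LieAlgebra ℂ g] {σ : g ≃ₗ⁅ℂ⁆ g} {N : ℕ}

lemma eps_ne_zero (N : ℕ) : eps N ≠ 0 := Complex.exp_ne_zero _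

lemma eps_pow_N (hN : 0 < N) : eps N ^ (N : ℕ) = 1 := by
  have hNc : (N : ℂ) ≠ 0 := Nat.cast_ne_zero.mpr hN.ne'
  unfold eps
  rw [← Complex.exp_nat_mul]
  rw [show (N : ℂ) * (2 * (Real.pi : ℂ) * Complex.I / N) = 2 * Real.pi * Complex.I by
    field_simp]
  exact Complex.exp_two_pi_mul_I

lemma eps_zpow_add_mul (hN : 0 < N) (k : ℤ) (i : ℕ) :
    eps N ^ (k + (N : ℤ) * i) = eps N ^ k := by
  rw [zpow_add₀ (eps_ne_zero N)]
  have : ((N : ℤ) * i) = ((N * i : ℕ) : ℤ) := by push_cast; ring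
  rw [this, zpow_natCast, pow_mul, eps_pow_N hN, one_pow, mul_one]

lemma homog_add_mul_iff (hN : 0 < N) (k : ℤ) (i : ℕ) (a : g) :
    homog g σ N (k + (N : ℤ) * i) a ↔ homog g σ N k a := by
  unfold homog
  rw [eps_zpow_add_mul hN]

lemma homog_zero (k : ℤ) : homog g σ N k (0 : g) := by
  unfold homog; rw [smul_zero]; exact map_zero σ.toLinearEquiv

lemma homog_lie {m n : ℤ} {a b : g} (ha : homog g σ N m a) (hb : homog g σ N n b) :
    homog g σ N (m + n) ⁅a, b⁆ := by
  unfold homog at *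
  have : σ ⁅a, b⁆ = ⁅σ a, σ b⁆ := LieHom.map_lie (σ : g →ₗ⁅ℂ⁆ g) a b
  rw [this, ha, hb, lie_smul, smul_lie, smul_smul, mul_comm, ← zpow_add₀ (eps_ne_zero N)]

lemma homog_scalar_eq {j j' : ℤ} {c : g} (hc : c ≠ 0)
    (h1 : homog g σ N j c) (h2 : homog g σ N j' c) : eps N ^ j = eps N ^ j' := by
  have h3 : (eps N ^ j - eps N ^ j') • c = 0 := by
    rw [sub_smul, ← h1, ← h2, sub_self]
  rcases smul_eq_zero.mp h3 with h | h
  · exact sub_eq_zero.mp h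
  · exact absurd h hc

lemma homog_of_scalar {k k' : ℤ} {a : g} (h : homog g σ N k' a)
    (he : eps N ^ k = eps N ^ k') : homog g σ N k a := by
  unfold homog at *
  rw [he]; exact h

lemma sGen_zero (k : ℤ) (h : homog g σ N k (0 : g)) : sGen g σ N k 0 h = 0 := by
  apply Subtype.ext
  show LaurentPolynomial.T k ⊗ₜ[ℂ] (0 : g) = 0
  rw [TensorProduct.tmul_zero]

lemma sGen_lie {m n : ℤ} {a b : g} (ha : homog g σ N m a) (hb : homog g σ N n b) :
    ⁅sGen g σ N m a ha, sGen g σ N n b hb⁆ =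
      sGen g σ N (m + n) ⁅a, b⁆ (homog_lie ha hb) := by
  apply Subtype.ext
  show ⁅LaurentPolynomial.T m ⊗ₜ[ℂ] a, LaurentPolynomial.T n ⊗ₜ[ℂ] b⁆ =
    LaurentPolynomial.T (m + n) ⊗ₜ[ℂ] ⁅a, b⁆
  rw [LaurentPolynomial.T_add]
  rfl

variable {W : Type} [AddCommGroup W] [Module ℂ W] {π : Loop g σ N →ₗ[ℂ] Module.End ℂ W}

lemma piFun_pos {k : ℤ} {a : g} (h : homog g σ N k a) :
    piFun g σ N W π a k = π (sGen g σ N k a h) := dif_pos h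

lemma piFun_neg {k : ℤ} {a : g} (h : ¬ homog g σ N k a) :
    piFun g σ N W π a k = 0 := dif_neg h

lemma piFun_zero (k : ℤ) : piFun g σ N W π 0 k = 0 := by
  rw [piFun_pos (homog_zero k), sGen_zero, map_zero]

lemma lie_mem_span {x y : Amb g} (hx : x ∈ Submodule.span ℂ (genSet g σ N))
    (hy : y ∈ Submodule.span ℂ (genSet g σ N)) :
    ⁅x, y⁆ ∈ Submodule.span ℂ (genSet g σ N) := by
  induction hx using Submodule.span_induction with
  | mem x hx =>
    induction hy using Submodule.span_induction with
    | mem y hy =>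
      obtain ⟨k, a, ha, rfl⟩ := hx
      obtain ⟨l, b, hb, rfl⟩ := hy
      refine Submodule.subset_span ⟨k + l, ⁅a, b⁆, homog_lie ha hb, ?_⟩
      rw [LaurentPolynomial.T_add]
      rfl
    | zero =>
      have hz : ⁅x, (0 : Amb g)⁆ = 0 := lie_zero x
      rw [hz]; exact Submodule.zero_mem _
    | add y z _ _ h1 h2 =>
      have hz : ⁅x, y + z⁆ = ⁅x, y⁆ + ⁅x, z⁆ := lie_add x y z
      rw [hz]; exact Submodule.add_mem _ h1 h2
    | smul c y _ h1 =>
      have hz : ⁅x, c • y⁆ = c • ⁅x, y⁆ := lie_smul c x y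
      rw [hz]; exact Submodule.smul_mem _ _ h1
  | zero =>
    have hz : ⁅(0 : Amb g), y⁆ = 0 := zero_lie y
    rw [hz]; exact Submodule.zero_mem _
  | add z z' _ _ h1 h2 =>
    have hz : ⁅z + z', y⁆ = ⁅z, y⁆ + ⁅z', y⁆ := add_lie z z' y
    rw [hz]; exact Submodule.add_mem _ h1 h2
  | smul c z _ h1 =>
    have hz : ⁅c • z, y⁆ = c • ⁅z, y⁆ := smul_lie c z y
    rw [hz]; exact Submodule.smul_mem _ _ h1

lemma mem_span_genSet (u : Loop g σ N) :
    (u : Amb g) ∈ Submodule.span ℂ (genSet g σ N) := by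
  let L' : LieSubalgebra ℂ (Amb g) :=
    { Submodule.span ℂ (genSet g σ N) with
      lie_mem' := fun hx hy => lie_mem_span hx hy }
  exact (LieSubalgebra.lieSpan_le (K := L')).mpr Submodule.subset_span u.2

lemma mem_span_sGen (u : Loop g σ N) :
    u ∈ Submodule.span ℂ
      {w : Loop g σ N | ∃ (k : ℤ) (a : g) (h : homog g σ N k a), w = sGen g σ N k a h} := by
  set S := {w : Loop g σ N | ∃ (k : ℤ) (a : g) (h : homog g σ N k a), w = sGen g σ N k a h}
    with hS
  have himg : ((Loop g σ N).toSubmodule.subtype) '' S = genSet g σ N := by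
    ext x
    constructor
    · rintro ⟨w, ⟨k, a, h, rfl⟩, rfl⟩
      exact ⟨k, a, h, rfl⟩
    · rintro ⟨k, a, h, rfl⟩
      exact ⟨sGen g σ N k a h, ⟨k, a, h, rfl⟩, rfl⟩
  have hm := mem_span_genSet u
  rw [← himg, ← Submodule.map_span] at hm
  obtain ⟨y, hy, hyx⟩ := hm
  have : y = u := Subtype.ext hyx
  rwa [← this]

end AuxG
section Core
variable {g : Type} [LieRing g] [LieAlgebra ℂ g] {σ : g ≃ₗ⁅ℂ⁆ g} {N : ℕ}
variable {W : Type} [AddCommGroup W] [Module ℂ W]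
variable {B : LinearMap.BilinForm ℂ g}
variable {π : Loop g σ N →ₗ[ℂ] Module.End ℂ W} {K : Module.End ℂ W}
variable {γ : Loop g σ N →ₗ[ℂ] Loop g σ N →ₗ[ℂ] ℂ}
variable {p : Polynomial ℂ}

lemma polyAct_sub' (p : Polynomial ℂ) (f h : ℤ → Module.End ℂ W) :
    polyAct N W p (fun k => f k - h k) = fun k => polyAct N W p f k - polyAct N W p h k := by
  funext k
  simp [polyAct_apply, smul_sub, Finset.sum_sub_distrib]

lemma polyAct_zero (p : Polynomial ℂ) :
    polyAct N W p (0 : ℤ → Module.End ℂ W) = 0 := by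
  unfold polyAct; exact map_zero _

/-- The unique polynomial annihilation property for the singular part. -/
lemma pAnn (hN : 0 < N) (hp : p ≠ 0)
    (hCp : ∀ (i : ℤ) (a : g), homog g σ N i a →
      memE W (polyAct N W p (piFun g σ N W π a)))
    {a : g} (ha : ∃ i, homog g σ N i a) {e : ℤ → Module.End ℂ W}
    (heE : memE W e) (h0 : memE0 N W (piFun g σ N W π a - e)) :
    polyAct N W p (fun k => piFun g σ N W π a k - e k) = 0 := by
  obtain ⟨i, hi⟩ := ha
  obtain ⟨q, hq0, hq⟩ := h0
  apply eq_zero_of_polyAct hN hq0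
  · -- polyAct q (polyAct p (fa - e)) = 0
    have h1 : polyAct N W q (polyAct N W p (fun k => piFun g σ N W π a k - e k))
        = polyAct N W p (polyAct N W q (fun k => piFun g σ N W π a k - e k)) := by
      rw [← polyAct_mul, ← polyAct_mul, mul_comm]
    rw [h1]
    have h2 : polyAct N W q (fun k => piFun g σ N W π a k - e k) = 0 := hq
    rw [h2, polyAct_zero]
  · rw [polyAct_sub']
    exact memE_sub (hCp i a hi) (memE_polyAct p heE)

/-- The regular part vanishes off the support. -/
lemma e_off_supp (hN : 0 < N) (hp : p ≠ 0)
    {c : g} {ec : ℤ → Module.End ℂ W} (hecE : memE W ec)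
    (hecp : polyAct N W p (fun k => piFun g σ N W π c k - ec k) = 0)
    {j : ℤ} (hj : ¬ homog g σ N j c) : ec j = 0 := by
  classical
  have hpe : polyAct N W p ec = polyAct N W p (piFun g σ N W π c) := by
    rw [polyAct_sub'] at hecp
    funext k
    have := congrFun hecp k
    simp only [Pi.zero_apply] at this
    exact (sub_eq_zero.mp this).symm
  have hr : (fun k => if homog g σ N k c then 0 else ec k) = 0 := by
    apply eq_zero_of_polyAct hN hp
    · funext k
      rw [polyAct_apply]
      by_cases h : homog g σ N k c
      · apply Finset.sum_eq_zero
        intro i _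
        have : homog g σ N (k + (N:ℤ) * i) c := (homog_add_mul_iff hN k i c).mpr h
        simp [this]
      · have hterm : ∀ i ∈ Finset.range (p.natDegree + 1),
            p.coeff i • (if homog g σ N (k + (N:ℤ) * i) c then 0 else ec (k + (N:ℤ) * i))
              = p.coeff i • ec (k + (N:ℤ) * i) := by
          intro i _
          have : ¬ homog g σ N (k + (N:ℤ) * i) c :=
            fun hh => h ((homog_add_mul_iff hN k i c).mp hh)
          simp [this]
        rw [Finset.sum_congr rfl hterm, ← polyAct_apply, hpe, polyAct_apply]
        apply Finset.sum_eq_zero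
        intro i _
        have : ¬ homog g σ N (k + (N:ℤ) * i) c :=
          fun hh => h ((homog_add_mul_iff hN k i c).mp hh)
        rw [piFun_neg this, smul_zero]
    · intro w
      obtain ⟨M, hM⟩ := hecE w
      exact ⟨M, fun k hk => by
        by_cases h : homog g σ N k c <;> simp [h, hM k hk]⟩
  have := congrFun hr j
  simpa [hj] using this

/-- The regular part of the zero element vanishes. -/
lemma e_of_zero (hN : 0 < N) (hp : p ≠ 0)
    {ec : ℤ → Module.End ℂ W} (hecE : memE W ec)
    (hecp : polyAct N W p (fun k => piFun g σ N W π (0 : g) k - ec k) = 0) :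
    ec = 0 := by
  apply eq_zero_of_polyAct hN hp
  · rw [polyAct_sub'] at hecp
    funext k
    have := congrFun hecp k
    simp only [Pi.zero_apply] at this
    have h2 : polyAct N W p (piFun g σ N W π (0 : g)) k = 0 := by
      rw [polyAct_apply]
      apply Finset.sum_eq_zero
      intro i _
      rw [piFun_zero, smul_zero]
    rw [h2] at this
    have h3 : polyAct N W p ec k = 0 := by
      have := sub_eq_zero.mp this
      rw [← this]
    exact h3
  · exact hecE

/-- `K` commutes with the regular part. -/
lemma commK (hN : 0 < N) (hp : p ≠ 0)
    (hKcomm : ∀ u, K * π u = π u * K)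
    {a : g} {ea : ℤ → Module.End ℂ W} (heaE : memE W ea)
    (hpa : polyAct N W p (fun k => piFun g σ N W π a k - ea k) = 0) :
    ∀ k, K * ea k = ea k * K := by
  have hKf : ∀ k, K * piFun g σ N W π a k = piFun g σ N W π a k * K := by
    intro k
    by_cases h : homog g σ N k a
    · rw [piFun_pos h]; exact hKcomm _
    · rw [piFun_neg h, mul_zero, zero_mul]
  have hg : (fun k => K * ea k - ea k * K) = 0 := by
    apply eq_zero_of_polyAct hN hp
    · have heq : (fun k => K * ea k - ea k * K)
          = fun k => (fun j => (piFun g σ N W π a j - ea j) * K) k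
              - (fun j => K * (piFun g σ N W π a j - ea j)) k := by
        funext k
        have h1 := hKf k
        show K * ea k - ea k * K = _ * K - K * _
        rw [sub_mul, mul_sub, h1]
        abel
      rw [heq, polyAct_sub', polyAct_rcomp, polyAct_lcomp, hpa]
      funext k
      simp
    · exact memE_sub (memE_lcomp K heaE) (memE_rcomp K heaE)
  intro k
  have := congrFun hg k
  simp only [Pi.zero_apply] at this
  exact sub_eq_zero.mp this

end Core
section Core2
variable {g : Type} [LieRing g] [LieAlgebra ℂ g] {σ : g ≃ₗ⁅ℂ⁆ g} {N : ℕ}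
variable {W : Type} [AddCommGroup W] [Module ℂ W]
variable {B : LinearMap.BilinForm ℂ g}
variable {π : Loop g σ N →ₗ[ℂ] Module.End ℂ W} {K : Module.End ℂ W}
variable {γ : Loop g σ N →ₗ[ℂ] Loop g σ N →ₗ[ℂ] ℂ}
variable {p : Polynomial ℂ}

lemma memE_congr {f h : ℤ → Module.End ℂ W} (e : f = h) (hf : memE W f) : memE W h :=
  e ▸ hf

lemma polyAct_conj_zero (T : Module.End ℂ W) {f : ℤ → Module.End ℂ W}
    (hf : polyAct N W p f = 0) :
    polyAct N W p (fun k => T * f k - f k * T) = 0 := by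
  funext k
  rw [polyAct_apply]
  have h1 : ∀ i ∈ Finset.range (p.natDegree + 1),
      p.coeff i • (T * f (k + (N:ℤ)*i) - f (k + (N:ℤ)*i) * T)
        = T * (p.coeff i • f (k + (N:ℤ)*i)) - (p.coeff i • f (k + (N:ℤ)*i)) * T := by
    intro i _
    rw [smul_sub, mul_smul_comm, smul_mul_assoc]
  rw [Finset.sum_congr rfl h1, Finset.sum_sub_distrib, ← Finset.mul_sum, ← Finset.sum_mul,
    ← polyAct_apply, hf]
  simp

lemma polyAct_conj_zero' (T : Module.End ℂ W) {f : ℤ → Module.End ℂ W}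
    (hf : polyAct N W p f = 0) :
    polyAct N W p (fun k => f k * T - T * f k) = 0 := by
  funext k
  rw [polyAct_apply]
  have h1 : ∀ i ∈ Finset.range (p.natDegree + 1),
      p.coeff i • (f (k + (N:ℤ)*i) * T - T * f (k + (N:ℤ)*i))
        = (p.coeff i • f (k + (N:ℤ)*i)) * T - T * (p.coeff i • f (k + (N:ℤ)*i)) := by
    intro i _
    rw [smul_sub, mul_smul_comm, smul_mul_assoc]
  rw [Finset.sum_congr rfl h1, Finset.sum_sub_distrib, ← Finset.sum_mul, ← Finset.mul_sum,
    ← polyAct_apply, hf]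
  simp

lemma polyAct_shift_zero (l : ℤ) {f : ℤ → Module.End ℂ W}
    (hf : polyAct N W p f = 0) :
    polyAct N W p (fun k => f (k + l)) = 0 := by
  rw [polyAct_shift, hf]
  funext k
  simp

lemma expand1 (X Y U : Module.End ℂ W) :
    X * U - U * X + ((Y - X) * U - U * (Y - X)) = Y * U - U * Y := by
  rw [sub_mul, mul_sub]; abel

lemma expand2 (T U V : Module.End ℂ W) :
    T * U - U * T + (T * (V - U) - (V - U) * T) = T * V - V * T := by
  rw [mul_sub, sub_mul]; abel

lemma core (hN : 0 < N) (hp : p ≠ 0)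
    (hγ : IsGamma g σ N B γ) (hmod : IsHatMod g σ N W π K γ)
    {a b : g} {m n : ℤ} (ham : homog g σ N m a) (hbn : homog g σ N n b)
    {ea eb ec : ℤ → Module.End ℂ W}
    (heaE : memE W ea) (hebE : memE W eb) (hecE : memE W ec)
    (hpa : polyAct N W p (fun k => piFun g σ N W π a k - ea k) = 0)
    (hpb : polyAct N W p (fun k => piFun g σ N W π b k - eb k) = 0)
    (hpc : polyAct N W p (fun k => piFun g σ N W π ⁅a, b⁆ k - ec k) = 0) :
    (ea m * eb n - eb n * ea m
        = ec (m + n) + (if m + n = 0 then ((m : ℂ) / (N : ℂ)) * B a b else 0) • K) ∧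
    ((piFun g σ N W π a m - ea m) * (piFun g σ N W π b n - eb n)
        - (piFun g σ N W π b n - eb n) * (piFun g σ N W π a m - ea m)
        = piFun g σ N W π ⁅a, b⁆ (m + n) - ec (m + n)) ∧
    (ea m * (piFun g σ N W π b n - eb n) - (piFun g σ N W π b n - eb n) * ea m = 0) ∧
    ((piFun g σ N W π a m - ea m) * eb n - eb n * (piFun g σ N W π a m - ea m) = 0) := by
  classical
  set fa := piFun g σ N W π a with hfa
  set fb := piFun g σ N W π b with hfb
  set fc := piFun g σ N W π ⁅a, b⁆ with hfc
  -- vanishing of fc at mixed bad points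
  have hfcvan : ∀ (k l : ℤ), (¬ homog g σ N k a ∧ homog g σ N l b)
      ∨ (homog g σ N k a ∧ ¬ homog g σ N l b) → fc (k + l) = 0 := by
    rintro k l hkl
    by_cases hc : ⁅a, b⁆ = (0 : g)
    · rw [hfc, hc]; exact piFun_zero _
    · rw [hfc]
      apply piFun_neg
      intro hklc
      rcases hkl with ⟨hk, hl⟩ | ⟨hk, hl⟩
      · apply hk
        have h1 : homog g σ N (m + l) ⁅a, b⁆ := homog_lie ham hl
        have he : eps N ^ (k + l) = eps N ^ (m + l) := homog_scalar_eq hc hklc h1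
        rw [zpow_add₀ (eps_ne_zero N), zpow_add₀ (eps_ne_zero N)] at he
        exact homog_of_scalar ham
          (mul_right_cancel₀ (zpow_ne_zero l (eps_ne_zero N)) he)
      · apply hl
        have h1 : homog g σ N (k + n) ⁅a, b⁆ := homog_lie hk hbn
        have he : eps N ^ (k + l) = eps N ^ (k + n) := homog_scalar_eq hc hklc h1
        rw [zpow_add₀ (eps_ne_zero N), zpow_add₀ (eps_ne_zero N)] at he
        exact homog_of_scalar hbn
          (mul_left_cancel₀ (zpow_ne_zero k (eps_ne_zero N)) he)
  -- vanishing of ec at bad points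
  have hecvan : ∀ (k l : ℤ), (¬ homog g σ N k a ∧ homog g σ N l b)
      ∨ (homog g σ N k a ∧ ¬ homog g σ N l b) → ec (k + l) = 0 := by
    rintro k l hkl
    by_cases hc : ⁅a, b⁆ = (0 : g)
    · have h0 : ec = 0 := by
        apply e_of_zero hN hp (π := π) hecE
        rw [← hc]
        exact hpc
      rw [h0]; rfl
    · apply e_off_supp hN hp hecE hpc
      intro hklc
      rcases hkl with ⟨hk, hl⟩ | ⟨hk, hl⟩
      · apply hk
        have h1 : homog g σ N (m + l) ⁅a, b⁆ := homog_lie ham hl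
        have he : eps N ^ (k + l) = eps N ^ (m + l) := homog_scalar_eq hc hklc h1
        rw [zpow_add₀ (eps_ne_zero N), zpow_add₀ (eps_ne_zero N)] at he
        exact homog_of_scalar ham
          (mul_right_cancel₀ (zpow_ne_zero l (eps_ne_zero N)) he)
      · apply hl
        have h1 : homog g σ N (k + n) ⁅a, b⁆ := homog_lie hk hbn
        have he : eps N ^ (k + l) = eps N ^ (k + n) := homog_scalar_eq hc hklc h1
        rw [zpow_add₀ (eps_ne_zero N), zpow_add₀ (eps_ne_zero N)] at he
        exact homog_of_scalar hbn
          (mul_left_cancel₀ (zpow_ne_zero k (eps_ne_zero N)) he)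
  -- the fundamental commutator relation on generating functions
  have hrel : ∀ (l : ℤ), homog g σ N l b → ∀ (k : ℤ),
      fa k * fb l - fb l * fa k
        = fc (k + l) + (if k + l = 0 ∧ homog g σ N k a
            then (((k : ℂ) / (N : ℂ)) * B a b) • K else 0) := by
    intro l hl k
    by_cases hk : homog g σ N k a
    · rw [hfa, hfb, hfc, piFun_pos hk, piFun_pos hl]
      have hm2 := hmod.2 (sGen g σ N k a hk) (sGen g σ N l b hl)
      rw [sGen_lie hk hl, hγ k l a b hk hl] at hm2
      rw [hm2, piFun_pos (homog_lie hk hl)]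
      congr 1
      by_cases h0 : k + l = 0 <;> simp [h0, hk]
    · rw [hfa, piFun_neg hk, hfcvan k l (Or.inl ⟨hk, hl⟩)]
      simp [hk]
  -- Step 1 : decompose in the first variable, for fixed l
  have hS1 : ∀ (l : ℤ), homog g σ N l b →
      ((fun k => ea k * fb l - fb l * ea k)
        = fun k => ec (k + l) + (if k + l = 0 ∧ homog g σ N k a
            then (((k : ℂ) / (N : ℂ)) * B a b) • K else 0)) ∧
      ((fun k => (fa k - ea k) * fb l - fb l * (fa k - ea k))
        = fun k => fc (k + l) - ec (k + l)) := by
    intro l hl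
    apply decomp_unique hN hp
    · exact memE_sub (memE_rcomp _ heaE) (memE_lcomp _ heaE)
    · apply memE_add (memE_shift l hecE)
      intro w
      refine ⟨1 - l, fun k hk => ?_⟩
      have hcond : ¬ (k + l = 0 ∧ homog g σ N k a) := by
        rintro ⟨h1, -⟩; omega
      simp [hcond]
    · exact polyAct_conj_zero' (fb l) hpa
    · exact polyAct_shift_zero l hpc
    · intro k
      have h1 := hrel l hl k
      rw [expand1 (ea k) (fa k) (fb l), h1]
      abel
  -- Step 2 : fix k := m, decompose in the second variable
  have hH : ∀ (l : ℤ), ea m * fb l - fb l * ea m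
      = ec (m + l) + (if m + l = 0 ∧ homog g σ N l b
          then (((m : ℂ) / (N : ℂ)) * B a b) • K else 0) := by
    intro l
    by_cases hl : homog g σ N l b
    · have h1 := congrFun (hS1 l hl).1 m
      rw [h1]
      congr 1
      by_cases h0 : m + l = 0 <;> simp [h0, ham, hl]
    · rw [hfb, piFun_neg hl, hecvan m l (Or.inr ⟨ham, hl⟩)]
      have hcond : ¬ (m + l = 0 ∧ homog g σ N l b) := fun h => hl h.2
      simp [hcond]
  have hS2 : ((fun l => ea m * eb l - eb l * ea m)
        = fun l => ec (m + l) + (if m + l = 0 ∧ homog g σ N l b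
            then (((m : ℂ) / (N : ℂ)) * B a b) • K else 0)) ∧
      ((fun l => ea m * (fb l - eb l) - (fb l - eb l) * ea m)
        = (0 : ℤ → Module.End ℂ W)) := by
    apply decomp_unique hN hp
    · exact memE_sub (memE_lcomp _ hebE) (memE_rcomp _ hebE)
    · apply memE_add
      · exact memE_congr (by funext k; rw [add_comm]) (memE_shift m hecE)
      · intro w
        refine ⟨1 - m, fun l hl => ?_⟩
        have hcond : ¬ (m + l = 0 ∧ homog g σ N l b) := by
          rintro ⟨h1, -⟩; omega
        simp [hcond]
    · exact polyAct_conj_zero (ea m) hpb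
    · exact polyAct_zero p
    · intro l
      rw [expand2 (ea m) (eb l) (fb l), hH l]
      simp
  -- Step 3 : fix k := m, singular part in the second variable
  have hH' : ∀ (l : ℤ), (fa m - ea m) * fb l - fb l * (fa m - ea m)
      = fc (m + l) - ec (m + l) := by
    intro l
    by_cases hl : homog g σ N l b
    · exact congrFun (hS1 l hl).2 m
    · rw [hfb, piFun_neg hl, hfcvan m l (Or.inr ⟨ham, hl⟩),
        hecvan m l (Or.inr ⟨ham, hl⟩)]
      simp
  have hS3 : ((fun l => (fa m - ea m) * eb l - eb l * (fa m - ea m))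
        = (0 : ℤ → Module.End ℂ W)) ∧
      ((fun l => (fa m - ea m) * (fb l - eb l) - (fb l - eb l) * (fa m - ea m))
        = fun l => fc (m + l) - ec (m + l)) := by
    apply decomp_unique hN hp
    · exact memE_sub (memE_lcomp _ hebE) (memE_rcomp _ hebE)
    · intro w; exact ⟨0, fun l _ => rfl⟩
    · exact polyAct_conj_zero (fa m - ea m) hpb
    · have heq : (fun l => fc (m + l) - ec (m + l))
          = fun l => (fun j => fc j - ec j) (l + m) := by
        funext l; rw [add_comm]
      rw [heq]
      exact polyAct_shift_zero m hpc
    · intro l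
      rw [expand2 (fa m - ea m) (eb l) (fb l), hH' l]
      simp
  refine ⟨?_, ?_, ?_, ?_⟩
  · have h1 := congrFun hS2.1 n
    rw [h1]
    congr 1
    by_cases h0 : m + n = 0 <;> simp [h0, hbn]
  · exact congrFun hS3.2 n
  · exact congrFun hS2.2 n
  · exact congrFun hS3.1 n

end Core2
section Final
variable {g : Type} [LieRing g] [LieAlgebra ℂ g] {σ : g ≃ₗ⁅ℂ⁆ g} {N : ℕ}
variable {W : Type} [AddCommGroup W] [Module ℂ W]

/-- The bilinear map `(u, v) ↦ q u * r v`. -/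
def compMul (q r : Loop g σ N →ₗ[ℂ] Module.End ℂ W) :
    Loop g σ N →ₗ[ℂ] Loop g σ N →ₗ[ℂ] Module.End ℂ W :=
  (LinearMap.mul ℂ (Module.End ℂ W)).compl₁₂ q r

@[simp] lemma compMul_apply (q r : Loop g σ N →ₗ[ℂ] Module.End ℂ W)
    (u v : Loop g σ N) : compMul q r u v = q u * r v := rfl

/-- The bilinear map `(u, v) ↦ q ⁅u, v⁆`. -/
def compLie (q : Loop g σ N →ₗ[ℂ] Module.End ℂ W) :
    Loop g σ N →ₗ[ℂ] Loop g σ N →ₗ[ℂ] Module.End ℂ W where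
  toFun u := q ∘ₗ (LieAlgebra.ad ℂ (Loop g σ N) u)
  map_add' u v := by ext w; simp
  map_smul' c u := by ext w; simp

@[simp] lemma compLie_apply (q : Loop g σ N →ₗ[ℂ] Module.End ℂ W)
    (u v : Loop g σ N) : compLie q u v = q ⁅u, v⁆ := by
  show q ((LieAlgebra.ad ℂ (Loop g σ N) u) v) = q ⁅u, v⁆
  rw [LieAlgebra.ad_apply]

end Final

/-- Factorization of a category-`C` module structure `(π, K)` on `W`
into `π_R` (restricted) and `π_E = π − π_R` (annihilated by a polynomial):
(a) `(π_R, K)` is again a `ĝ[σ]`-module structure; (b) `π_E` is a Lie algebra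
homomorphism; (c) `[π_R(u), π_E(v)] = 0`; (d) `(W, (π_R, K))` is restricted;
(e) there is a nonzero `p` with `π_E((s^k p(s^N)) ⊗ a) = 0` for all `k` and `a ∈ g_k`;
(f) if `(W, (π, K))` is irreducible then the only subspaces invariant under `K` and all
`π_R(u)`, `π_E(v)` are `0` and `W`. -/
theorem statement0
    (g : Type) [LieRing g] [LieAlgebra ℂ g] [LieAlgebra.IsSimple ℂ g]
    [FiniteDimensional ℂ g]
    (N : ℕ) (hN : 0 < N) (σ : g ≃ₗ⁅ℂ⁆ g) (hσ : ∀ a : g, (⇑σ)^[N] a = a)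
    (B : LinearMap.BilinForm ℂ g)
    (hBsymm : ∀ a b : g, B a b = B b a)
    (hBinv : ∀ a b c : g, B ⁅a, b⁆ c = B a ⁅b, c⁆)
    (hBnd : ∀ a : g, (∀ b : g, B a b = 0) → a = 0)
    (W : Type) [AddCommGroup W] [Module ℂ W]
    (π πR : Loop g σ N →ₗ[ℂ] Module.End ℂ W) (K : Module.End ℂ W)
    (γ : Loop g σ N →ₗ[ℂ] Loop g σ N →ₗ[ℂ] ℂ) (hγ : IsGamma g σ N B γ)
    (hmod : IsHatMod g σ N W π K γ)
    (hC : InCatC g σ N W π)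
    (hπR : IsPiR g σ N W π πR) :
    (∀ u, K * πR u = πR u * K) ∧
    (∀ u v, πR u * πR v - πR v * πR u = πR ⁅u, v⁆ + γ u v • K) ∧
    (∀ u v, (π - πR) u * (π - πR) v - (π - πR) v * (π - πR) u = (π - πR) ⁅u, v⁆) ∧
    (∀ u v, πR u * (π - πR) v = (π - πR) v * πR u) ∧
    IsRestricted g σ N W πR ∧
    (∃ p : Polynomial ℂ, p ≠ 0 ∧
      ∀ (k : ℤ) (a : g) (h : ∀ i : ℕ, homog g σ N (k + N * i) a),
        (π - πR) (sPolyGen g σ N p k a h) = 0) ∧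
    (IsIrred g σ N W π K → ∀ S : Submodule ℂ W, (∀ x ∈ S, K x ∈ S) →
      (∀ u, ∀ x ∈ S, πR u x ∈ S) → (∀ u, ∀ x ∈ S, (π - πR) u x ∈ S) →
      S = ⊥ ∨ S = ⊤) := by
  classical
  obtain ⟨p, hp0, hCp⟩ := hC
  choose E hE1 hE2 hE3 using hπR
  have hpE : ∀ (a : g) (ha : ∃ i, homog g σ N i a),
      polyAct N W p (fun k => piFun g σ N W π a k - E a ha k) = 0 :=
    fun a ha => pAnn hN hp0 hCp ha (hE1 a ha) (hE2 a ha)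
  have hπRgen : ∀ (k : ℤ) (a : g) (h : homog g σ N k a),
      πR (sGen g σ N k a h) = E a ⟨k, h⟩ k :=
    fun k a h => hE3 a ⟨k, h⟩ k h
  have hπEgen : ∀ (k : ℤ) (a : g) (h : homog g σ N k a),
      (π - πR) (sGen g σ N k a h) = piFun g σ N W π a k - E a ⟨k, h⟩ k := by
    intro k a h
    rw [LinearMap.sub_apply, hπRgen, piFun_pos h]
  have hπEgen' : ∀ (k : ℤ) (a : g) (h : homog g σ N k a),
      π (sGen g σ N k a h) - πR (sGen g σ N k a h)
        = piFun g σ N W π a k - E a ⟨k, h⟩ k := by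
    intro k a h
    rw [← LinearMap.sub_apply]
    exact hπEgen k a h
  have hspan : Submodule.span ℂ
      {w : Loop g σ N | ∃ (k : ℤ) (a : g) (h : homog g σ N k a), w = sGen g σ N k a h}
        = ⊤ := by
    rw [eq_top_iff]
    intro u _
    exact mem_span_sGen u
  refine ⟨?_, ?_, ?_, ?_, ?_, ?_, ?_⟩
  · -- (a) part 1 : K commutes with πR
    have heq : (LinearMap.mul ℂ (Module.End ℂ W) K) ∘ₗ πR
        = ((LinearMap.mul ℂ (Module.End ℂ W)).flip K) ∘ₗ πR := by
      apply LinearMap.ext_on hspan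
      rintro u ⟨k, a, h, rfl⟩
      show K * πR (sGen g σ N k a h) = πR (sGen g σ N k a h) * K
      rw [hπRgen]
      exact commK hN hp0 hmod.1 (hE1 a ⟨k, h⟩) (hpE a ⟨k, h⟩) k
    intro u
    exact LinearMap.congr_fun heq u
  · -- (a) part 2 : commutator relation for πR
    have heq : compMul πR πR - (compMul πR πR).flip
        = compLie πR + γ.compr₂ (LinearMap.toSpanSingleton ℂ (Module.End ℂ W) K) := by
      apply LinearMap.ext_on hspan
      rintro u ⟨k, a, h, rfl⟩
      apply LinearMap.ext_on hspan
      rintro v ⟨l, b, h2, rfl⟩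
      simp only [LinearMap.sub_apply, LinearMap.add_apply, LinearMap.flip_apply,
        compMul_apply, compLie_apply, LinearMap.compr₂_apply,
        LinearMap.toSpanSingleton_apply]
      rw [sGen_lie h h2, hπRgen, hπRgen, hπRgen, hγ k l a b h h2]
      have hcore := (core hN hp0 hγ hmod h h2 (hE1 a ⟨k, h⟩) (hE1 b ⟨l, h2⟩)
        (hE1 ⁅a, b⁆ ⟨k + l, homog_lie h h2⟩) (hpE a ⟨k, h⟩) (hpE b ⟨l, h2⟩)
        (hpE ⁅a, b⁆ ⟨k + l, homog_lie h h2⟩)).1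
      rw [hcore]
    intro u v
    have h2 := LinearMap.congr_fun (LinearMap.congr_fun heq u) v
    simpa using h2
  · -- (b) : πE is a homomorphism
    have heq : compMul (π - πR) (π - πR) - (compMul (π - πR) (π - πR)).flip
        = compLie (π - πR) := by
      apply LinearMap.ext_on hspan
      rintro u ⟨k, a, h, rfl⟩
      apply LinearMap.ext_on hspan
      rintro v ⟨l, b, h2, rfl⟩
      simp only [LinearMap.sub_apply, LinearMap.flip_apply, compMul_apply, compLie_apply]
      rw [sGen_lie h h2, hπEgen', hπEgen', hπEgen']
      exact (core hN hp0 hγ hmod h h2 (hE1 a ⟨k, h⟩) (hE1 b ⟨l, h2⟩)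
        (hE1 ⁅a, b⁆ ⟨k + l, homog_lie h h2⟩) (hpE a ⟨k, h⟩) (hpE b ⟨l, h2⟩)
        (hpE ⁅a, b⁆ ⟨k + l, homog_lie h h2⟩)).2.1
    intro u v
    have h2 := LinearMap.congr_fun (LinearMap.congr_fun heq u) v
    simpa using h2
  · -- (c) : πR and πE commute
    have heq : compMul πR (π - πR) = (compMul (π - πR) πR).flip := by
      apply LinearMap.ext_on hspan
      rintro u ⟨k, a, h, rfl⟩
      apply LinearMap.ext_on hspan
      rintro v ⟨l, b, h2, rfl⟩
      simp only [LinearMap.flip_apply, compMul_apply]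
      rw [hπRgen, hπEgen]
      have hcore := (core hN hp0 hγ hmod h h2 (hE1 a ⟨k, h⟩) (hE1 b ⟨l, h2⟩)
        (hE1 ⁅a, b⁆ ⟨k + l, homog_lie h h2⟩) (hpE a ⟨k, h⟩) (hpE b ⟨l, h2⟩)
        (hpE ⁅a, b⁆ ⟨k + l, homog_lie h h2⟩)).2.2.1
      exact sub_eq_zero.mp hcore
    intro u v
    have h2 := LinearMap.congr_fun (LinearMap.congr_fun heq u) v
    simpa using h2
  · -- (d) : restrictedness
    intro w i a hia
    obtain ⟨M, hM⟩ := hE1 a ⟨i, hia⟩ w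
    refine ⟨M, fun k hk h => ?_⟩
    rw [hE3 a ⟨i, hia⟩ k h]
    exact hM k hk
  · -- (e) : annihilation of the singular part
    refine ⟨p, hp0, fun k a h => ?_⟩
    have ha : ∃ i, homog g σ N i a := ⟨k + (N : ℤ) * (0 : ℕ), h 0⟩
    have hsum : (π - πR) (sPolyGen g σ N p k a h)
        = ∑ i ∈ Finset.range (p.natDegree + 1),
            p.coeff i • (piFun g σ N W π a (k + (N : ℤ) * i) - E a ha (k + (N : ℤ) * i)) := by
      unfold sPolyGen
      rw [map_sum]
      refine Finset.sum_congr rfl fun i _ => ?_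
      rw [map_smul, hπEgen]
    have h2 : polyAct N W p (fun j => piFun g σ N W π a j - E a ha j) k
        = ∑ i ∈ Finset.range (p.natDegree + 1),
            p.coeff i • (piFun g σ N W π a (k + (N : ℤ) * i) - E a ha (k + (N : ℤ) * i)) :=
      polyAct_apply _ _ _
    rw [hsum, ← h2, hpE a ha]
    rfl
  · -- (f) : irreducibility
    intro hirr S hKS hRS hES
    refine hirr.2 S hKS (fun u x hx => ?_)
    have h1 : π u x = πR u x + (π - πR) u x := by
      rw [LinearMap.sub_apply, LinearMap.sub_apply]
      abel
    rw [h1]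
    exact S.add_mem (hRS u x hx) (hES u x hx)

end Twisted
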